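/- For real numbers 0 < a < b, the integral of sqrt((r-a)*(b-r))/r over r in [a,b] equals π*((a+b)/2 - sqrt(a*b)). -/

import Mathlib

set_option maxHeartbeats 1000000 in
/-- For real numbers `0 < a < b`, the integral of `sqrt((r-a)*(b-r))/r` over `[a,b]`
equals `π * ((a+b)/2 - sqrt (a*b))`. -/
theorem stmt_0 (a b : ℝ) (ha : 0 < a) (hab : a < b) :
    ∫ r in a..b, Real.sqrt ((r - a) * (b - r)) / r
      = Real.pi * ((a + b) / 2 - Real.sqrt (a * b)) := by
  have hba : (0:ℝ) < b - a := by linarith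
  have hb : (0:ℝ) < b := lt_trans ha hab
  set F : ℝ → ℝ := fun r =>
    Real.sqrt ((r - a) * (b - r))
      + (a + b) / 2 * Real.arcsin ((2*r - a - b) / (b - a))
      - Real.sqrt (a*b) * Real.arcsin (((a+b)*r - 2*(a*b)) / ((b-a)*r)) with hF
  have key : ∫ r in a..b, Real.sqrt ((r - a) * (b - r)) / r = F b - F a := by
    apply intervalIntegral.integral_eq_sub_of_hasDerivAt_of_le hab.le
    · -- continuity of F on [a,b]
      apply ContinuousOn.sub
      · apply ContinuousOn.add
        · exact (Real.continuous_sqrt.comp (by continuity)).continuousOn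
        · exact (continuous_const.mul (Real.continuous_arcsin.comp
            (by continuity))).continuousOn
      · apply ContinuousOn.mul continuousOn_const
        apply Real.continuous_arcsin.comp_continuousOn
        apply ContinuousOn.div (by fun_prop) (by fun_prop)
        intro x hx
        rw [Set.mem_Icc] at hx
        exact mul_ne_zero hba.ne' (lt_of_lt_of_le ha hx.1).ne'
    · intro r hr
      obtain ⟨hr1, hr2⟩ := hr
      have hrpos : 0 < r := lt_trans ha hr1
      have hp : 0 < (r - a) * (b - r) := mul_pos (by linarith) (by linarith)
      set s : ℝ := Real.sqrt ((r - a) * (b - r)) with hsdef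
      have hs : 0 < s := Real.sqrt_pos.mpr hp
      have hs2 : s ^ 2 = (r - a) * (b - r) := Real.sq_sqrt hp.le
      have hab2 : Real.sqrt (a*b) ^ 2 = a * b := Real.sq_sqrt (by positivity)
      have hsab : 0 < Real.sqrt (a*b) := Real.sqrt_pos.mpr (by positivity)
      -- term 1
      have h1 : HasDerivAt (fun x : ℝ => (x - a) * (b - x)) (a + b - 2*r) r := by
        have h := ((hasDerivAt_id r).sub_const a).mul
          ((hasDerivAt_const r b).sub (hasDerivAt_id r))
        simp only [id_eq] at h
        exact h.congr_deriv (by simp only [Pi.sub_apply, id_eq]; ring)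
      have ht1 : HasDerivAt (fun x : ℝ => Real.sqrt ((x - a) * (b - x)))
          (1 / (2 * s) * (a + b - 2*r)) r :=
        (Real.hasDerivAt_sqrt hp.ne').comp r h1
      -- term 2
      have hu1lt : (2*r - a - b) / (b - a) < 1 := by
        rw [div_lt_one hba]; linarith
      have hu1gt : -1 < (2*r - a - b) / (b - a) := by
        rw [lt_div_iff₀ hba]; linarith
      have h2 : HasDerivAt (fun x : ℝ => (2*x - a - b) / (b - a)) (2 / (b - a)) r := by
        have h := ((((hasDerivAt_id r).const_mul (2:ℝ)).sub_const a).sub_const b).div_const (b - a)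
        simpa using h
      have e1 : Real.sqrt (1 - ((2*r - a - b) / (b - a)) ^ 2) = 2 * s / (b - a) := by
        rw [show 1 - ((2*r - a - b) / (b - a)) ^ 2 = (2 * s / (b - a)) ^ 2 by
          field_simp; linear_combination (-4:ℝ)*hs2]
        exact Real.sqrt_sq (by positivity)
      have ht2 : HasDerivAt (fun x : ℝ => Real.arcsin ((2*x - a - b) / (b - a)))
          (1 / (2 * s / (b - a)) * (2 / (b - a))) r := by
        have h := (Real.hasDerivAt_arcsin hu1gt.ne' hu1lt.ne).comp r h2
        rwa [e1] at h
      -- term 3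
      have hden : (b - a) * r ≠ 0 := mul_ne_zero hba.ne' hrpos.ne'
      have hnum : HasDerivAt (fun x : ℝ => (a+b)*x - 2*(a*b)) (a + b) r := by
        have h := ((hasDerivAt_id r).const_mul (a+b)).sub_const (2*(a*b))
        simpa using h
      have hd : HasDerivAt (fun x : ℝ => (b - a)*x) (b - a) r := by
        have h := (hasDerivAt_id r).const_mul (b - a)
        simpa using h
      have h3 : HasDerivAt (fun x : ℝ => ((a+b)*x - 2*(a*b)) / ((b-a)*x))
          (((a+b) * ((b-a)*r) - ((a+b)*r - 2*(a*b)) * (b - a)) / ((b-a)*r) ^ 2) r :=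
        hnum.div hd hden
      have hu2lt : ((a+b)*r - 2*(a*b)) / ((b-a)*r) < 1 := by
        rw [div_lt_one (by positivity)]; nlinarith
      have hu2gt : -1 < ((a+b)*r - 2*(a*b)) / ((b-a)*r) := by
        rw [lt_div_iff₀ (by positivity)]; nlinarith
      have e2 : Real.sqrt (1 - (((a+b)*r - 2*(a*b)) / ((b-a)*r)) ^ 2)
          = 2 * Real.sqrt (a*b) * s / ((b-a)*r) := by
        rw [show 1 - (((a+b)*r - 2*(a*b)) / ((b-a)*r)) ^ 2
            = (2 * Real.sqrt (a*b) * s / ((b-a)*r)) ^ 2 by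
          have e : (Real.sqrt a * Real.sqrt b)^2 = a*b := by
            rw [mul_pow, Real.sq_sqrt ha.le, Real.sq_sqrt hb.le]
          field_simp
          linear_combination (-4*a*b)*hs2 - (4*s^2)*hab2]
        exact Real.sqrt_sq (by positivity)
      have ht3 : HasDerivAt (fun x : ℝ => Real.arcsin (((a+b)*x - 2*(a*b)) / ((b-a)*x)))
          (1 / (2 * Real.sqrt (a*b) * s / ((b-a)*r)) *
            (((a+b) * ((b-a)*r) - ((a+b)*r - 2*(a*b)) * (b - a)) / ((b-a)*r) ^ 2)) r := by
        have h := (Real.hasDerivAt_arcsin hu2gt.ne' hu2lt.ne).comp r h3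
        rwa [e2] at h
      -- combine
      have hFd : HasDerivAt F
          (1 / (2 * s) * (a + b - 2*r)
            + (a + b) / 2 * (1 / (2 * s / (b - a)) * (2 / (b - a)))
            - Real.sqrt (a*b) * (1 / (2 * Real.sqrt (a*b) * s / ((b-a)*r)) *
              (((a+b) * ((b-a)*r) - ((a+b)*r - 2*(a*b)) * (b - a)) / ((b-a)*r) ^ 2))) r :=
        (ht1.add (ht2.const_mul ((a + b) / 2))).sub (ht3.const_mul (Real.sqrt (a*b)))
      have hDe : 1 / (2 * s) * (a + b - 2*r)
            + (a + b) / 2 * (1 / (2 * s / (b - a)) * (2 / (b - a)))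
            - Real.sqrt (a*b) * (1 / (2 * Real.sqrt (a*b) * s / ((b-a)*r)) *
              (((a+b) * ((b-a)*r) - ((a+b)*r - 2*(a*b)) * (b - a)) / ((b-a)*r) ^ 2))
          = s / r := by
        field_simp
        linear_combination (-2)*hs2
      rw [hDe] at hFd
      exact hFd
    · -- integrability
      apply ContinuousOn.intervalIntegrable
      apply ContinuousOn.div
      · exact (Real.continuous_sqrt.comp (by continuity)).continuousOn
      · exact continuousOn_id
      · intro x hx
        rw [Set.uIcc_of_le hab.le, Set.mem_Icc] at hx
        exact (lt_of_lt_of_le ha hx.1).ne'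
  rw [key, hF]
  have harc1 : (2*b - a - b) / (b - a) = 1 := by
    rw [show 2*b - a - b = b - a by ring]; exact div_self hba.ne'
  have harc2 : ((a+b)*b - 2*(a*b)) / ((b-a)*b) = 1 := by
    rw [show (a+b)*b - 2*(a*b) = (b-a)*b by ring]
    exact div_self (mul_ne_zero hba.ne' hb.ne')
  have harc3 : (2*a - a - b) / (b - a) = -1 := by
    rw [show 2*a - a - b = -(b - a) by ring, neg_div, div_self hba.ne']
  have harc4 : ((a+b)*a - 2*(a*b)) / ((b-a)*a) = -1 := by
    rw [show (a+b)*a - 2*(a*b) = -((b-a)*a) by ring, neg_div,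
      div_self (mul_ne_zero hba.ne' ha.ne')]
  simp only [harc1, harc2, harc3, harc4, Real.arcsin_one, Real.arcsin_neg,
    sub_self, mul_zero, zero_mul, Real.sqrt_zero]
  ring
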